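/- arXiv:2205.03328 — 5 statements merged into one kernel-verified Lean document; each statement's English description precedes it below -/
import Mathlib

section
/- Define f(n0) = n0·F(n, n0). Let m and n be positive integers with m ≤ n, and let n_1, ..., n_m be positive integers with n_1 + ... + n_m = n. Then Σ_{i=1}^{m} f(n_i) ≤ (m−1)·f(1) + f(n−m+1). That is, among all ways of dismembering a ring of n nodes into m disjoint mini-rings by m jammers, the most harmful configuration isolates m−1 single nodes and leaves one component of n−m+1 nodes. -/
open Finset

/-- Closed-form stationary version age of a single node in a mini-ring of `n0` gossiping
nodes cut out of a ring of `n` nodes (source rate `lamS`, per-node update rate `lam/n`,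
per-link rate `lam/2`). -/
noncomputable def ringNodeAge (lamS lam : ℝ) (n n0 : ℕ) : ℝ :=
  (lamS / lam) *
    ((∑ j ∈ Finset.Icc 1 (n0 - 1), ∏ k ∈ Finset.Icc 1 j, 1 / ((k : ℝ) / (n : ℝ) + 1))
      + ((n : ℝ) / (n0 : ℝ)) * ∏ k ∈ Finset.Icc 1 (n0 - 1), 1 / ((k : ℝ) / (n : ℝ) + 1))

/-- Sum of version ages over the `n0` nodes of such a mini-ring. -/
noncomputable def ringSumAge (lamS lam : ℝ) (n n0 : ℕ) : ℝ :=
  (n0 : ℝ) * ringNodeAge lamS lam n n0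

noncomputable def Qprod (n j : ℕ) : ℝ := ∏ k ∈ Finset.Icc 1 j, 1 / ((k : ℝ) / (n : ℝ) + 1)

noncomputable def Ssum (n j : ℕ) : ℝ := ∑ k ∈ Finset.Icc 1 j, Qprod n k

lemma Qprod_pos (n j : ℕ) : 0 < Qprod n j := by
  apply Finset.prod_pos
  intro k _
  have : (0:ℝ) ≤ (k : ℝ) / (n : ℝ) := by positivity
  positivity

lemma Ssum_mono (n : ℕ) {a b : ℕ} (hab : a ≤ b) : Ssum n a ≤ Ssum n b := by
  apply Finset.sum_le_sum_of_subset_of_nonneg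
  · exact Finset.Icc_subset_Icc_right hab
  · intro i _ _; exact (Qprod_pos n i).le

lemma ringSumAge_step (lamS lam : ℝ) (n : ℕ) (hn : 0 < n) (k : ℕ) (hk : 1 ≤ k) :
    ringSumAge lamS lam n (k + 1)
      = ringSumAge lamS lam n k + (lamS / lam) * Ssum n k := by
  obtain ⟨j, rfl⟩ : ∃ j, k = j + 1 := ⟨k - 1, by omega⟩
  unfold ringSumAge ringNodeAge Ssum Qprod
  have h1 : (j + 1 + 1) - 1 = j + 1 := rfl
  have h2 : (j + 1) - 1 = j := rfl
  rw [h1, h2]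
  rw [Finset.sum_Icc_succ_top (by omega : 1 ≤ j + 1),
    Finset.prod_Icc_succ_top (by omega : 1 ≤ j + 1)]
  have hn' : (n : ℝ) ≠ 0 := by positivity
  have hd : ((j + 1 : ℕ) : ℝ) / (n : ℝ) + 1 ≠ 0 := by positivity
  have hj1 : ((j:ℝ) + 1) ≠ 0 := by positivity
  have hj2 : ((j:ℝ) + 1 + 1) ≠ 0 := by positivity
  set S : ℝ := ∑ x ∈ Finset.Icc 1 j, ∏ k ∈ Finset.Icc 1 x, 1 / ((k : ℝ) / (n : ℝ) + 1)
    with hS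
  set P : ℝ := ∏ k ∈ Finset.Icc 1 j, 1 / ((k : ℝ) / (n : ℝ) + 1) with hP
  set c : ℝ := lamS / lam with hcc
  push_cast at hd ⊢
  field_simp
  ring

lemma ringSumAge_merge (lamS lam : ℝ) (n : ℕ) (hc : 0 ≤ lamS / lam) (hn : 0 < n) :
    ∀ b, 1 ≤ b → ∀ a, 1 ≤ a →
      ringSumAge lamS lam n a + ringSumAge lamS lam n b
        ≤ ringSumAge lamS lam n 1 + ringSumAge lamS lam n (a + b - 1) := by
  intro b hb
  induction b, hb using Nat.le_induction with
  | base =>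
    intro a ha
    have : a + 1 - 1 = a := by omega
    rw [this]; linarith
  | succ b hb ih =>
    intro a ha
    have hab : 1 ≤ a + b - 1 := by omega
    have e1 : a + (b + 1) - 1 = (a + b - 1) + 1 := by omega
    rw [e1, ringSumAge_step lamS lam n hn b hb,
      ringSumAge_step lamS lam n hn (a + b - 1) hab]
    have h2 := ih a ha
    have h3 : Ssum n b ≤ Ssum n (a + b - 1) := Ssum_mono n (by omega)
    have h4 : (lamS / lam) * Ssum n b ≤ (lamS / lam) * Ssum n (a + b - 1) :=
      mul_le_mul_of_nonneg_left h3 hc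
    linarith

lemma ringSumAge_main (lamS lam : ℝ) (n : ℕ) (hc : 0 ≤ lamS / lam) (hn : 0 < n) :
    ∀ m, 1 ≤ m → ∀ a : Fin m → ℕ, (∀ i, 1 ≤ a i) →
      ∑ i, ringSumAge lamS lam n (a i)
        ≤ ((m - 1 : ℕ) : ℝ) * ringSumAge lamS lam n 1
            + ringSumAge lamS lam n ((∑ i, a i) - (m - 1)) := by
  intro m hm
  induction m, hm using Nat.le_induction with
  | base =>
    intro a ha
    simp [Fin.sum_univ_one]
  | succ m hm ih =>
    intro a ha
    rw [Fin.sum_univ_succ, Fin.sum_univ_succ (f := fun i => (a i : ℕ))]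
    set T : ℕ := ∑ i : Fin m, a i.succ with hT
    have hTm : m ≤ T := by
      calc m = ∑ _i : Fin m, 1 := by simp
        _ ≤ T := Finset.sum_le_sum fun i _ => ha i.succ
    have h1 := ih (fun i => a i.succ) (fun i => ha i.succ)
    rw [← hT] at h1
    have hb : 1 ≤ T - (m - 1) := by omega
    have h2 := ringSumAge_merge lamS lam n hc hn (T - (m - 1)) hb (a 0) (ha 0)
    have e1 : a 0 + (T - (m - 1)) - 1 = a 0 + T - (m + 1 - 1) := by omega
    rw [e1] at h2
    have e2 : ((m + 1 - 1 : ℕ) : ℝ) = ((m - 1 : ℕ) : ℝ) + 1 := by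
      have : m + 1 - 1 = (m - 1) + 1 := by omega
      rw [this]; push_cast; ring
    rw [e2]
    linarith

/-- Among all ways of dismembering a ring of `n` nodes into `m` disjoint mini-rings of sizes
`n_1 + ⋯ + n_m = n`, the most harmful configuration isolates `m - 1` single nodes and leaves
one component of `n - m + 1` nodes: `Σ_i f(n_i) ≤ (m-1)·f(1) + f(n-m+1)`. -/
theorem most_harmful_jammer_configuration
    (lamS lam : ℝ) (hlamS : 0 < lamS) (hlam : 0 < lam)
    (m n : ℕ) (hm : 0 < m) (hn : 0 < n) (hmn : m ≤ n)
    (a : Fin m → ℕ) (ha : ∀ i, 0 < a i) (hsum : ∑ i, a i = n) :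
    ∑ i, ringSumAge lamS lam n (a i)
      ≤ ((m - 1 : ℕ) : ℝ) * ringSumAge lamS lam n 1 + ringSumAge lamS lam n (n - m + 1) := by
  have hc : 0 ≤ lamS / lam := by positivity
  have h := ringSumAge_main lamS lam n hc hn m hm a (fun i => ha i)
  rw [hsum] at h
  have e : n - (m - 1) = n - m + 1 := by omega
  rwa [e] at h
end

section
/- For all positive integers n0 and n with n0 ≤ n and all positive reals λs, λ, one has F(n, n0) ≥ (λs/λ)·(n/n0)·exp(−n0²/n). -/
open Finset

/-- For all positive integers `n0 ≤ n` and positive reals `lamS, lam`,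
`F(n, n0) ≥ (lamS/lam)·(n/n0)·exp(-n0²/n)`. -/
theorem ringNodeAge_lower_bound
    (n n0 : ℕ) (lamS lam : ℝ)
    (hn0 : 0 < n0) (hn0n : n0 ≤ n) (hlamS : 0 < lamS) (hlam : 0 < lam) :
    (lamS / lam) * ((n : ℝ) / (n0 : ℝ)) * Real.exp (-(n0 : ℝ) ^ 2 / (n : ℝ))
      ≤ ringNodeAge lamS lam n n0 := by
  have hn : 0 < n := lt_of_lt_of_le hn0 hn0n
  have hnR : (0:ℝ) < n := by exact_mod_cast hn
  have hn0R : (0:ℝ) < n0 := by exact_mod_cast hn0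
  have hpos : ∀ k : ℕ, (0:ℝ) < (k : ℝ) / (n : ℝ) + 1 := fun k => by positivity
  -- product lower bound
  have hprod : Real.exp (-(n0 : ℝ) ^ 2 / (n : ℝ))
      ≤ ∏ k ∈ Finset.Icc 1 (n0 - 1), 1 / ((k : ℝ) / (n : ℝ) + 1) := by
    have h1 : ∏ k ∈ Finset.Icc 1 (n0 - 1), Real.exp (-((k : ℝ) / (n : ℝ)))
        ≤ ∏ k ∈ Finset.Icc 1 (n0 - 1), 1 / ((k : ℝ) / (n : ℝ) + 1) := by
      apply Finset.prod_le_prod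
      · intro k _; positivity
      · intro k _
        have h := Real.add_one_le_exp ((k : ℝ) / (n : ℝ))
        rw [Real.exp_neg, one_div]
        exact inv_anti₀ (hpos k) h
    refine le_trans ?_ h1
    rw [← Real.exp_sum]
    apply Real.exp_le_exp.mpr
    rw [Finset.sum_neg_distrib, neg_div, neg_le_neg_iff]
    have hsum : ∑ k ∈ Finset.Icc 1 (n0 - 1), ((k : ℝ) / (n : ℝ))
        ≤ (Finset.Icc 1 (n0 - 1)).card • ((n0 : ℝ) / (n : ℝ)) := by
      apply Finset.sum_le_card_nsmul
      intro k hk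
      have : (k : ℝ) ≤ (n0 : ℝ) := by
        have := (Finset.mem_Icc.mp hk).2
        exact_mod_cast le_trans this (Nat.sub_le _ _)
      exact div_le_div_of_nonneg_right this hnR.le
    refine hsum.trans ?_
    rw [Nat.card_Icc, nsmul_eq_mul]
    have hcard : ((n0 - 1 + 1 - 1 : ℕ) : ℝ) ≤ (n0 : ℝ) := by
      have : n0 - 1 + 1 - 1 ≤ n0 := by omega
      exact_mod_cast this
    calc ((n0 - 1 + 1 - 1 : ℕ) : ℝ) * ((n0 : ℝ) / (n : ℝ))
        ≤ (n0 : ℝ) * ((n0 : ℝ) / (n : ℝ)) := by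
          apply mul_le_mul_of_nonneg_right hcard; positivity
      _ = (n0 : ℝ) ^ 2 / (n : ℝ) := by ring
  -- assemble
  unfold ringNodeAge
  have hsumnn : 0 ≤ ∑ j ∈ Finset.Icc 1 (n0 - 1), ∏ k ∈ Finset.Icc 1 j, 1 / ((k : ℝ) / (n : ℝ) + 1) := by
    apply Finset.sum_nonneg; intro j _
    apply Finset.prod_nonneg; intro k _
    positivity
  have hll : 0 ≤ lamS / lam := by positivity
  have hnn0 : 0 ≤ (n : ℝ) / (n0 : ℝ) := by positivity
  have h2 : ((n:ℝ)/(n0:ℝ)) * Real.exp (-(n0 : ℝ) ^ 2 / (n : ℝ))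
      ≤ ((n:ℝ)/(n0:ℝ)) * ∏ k ∈ Finset.Icc 1 (n0 - 1), 1 / ((k : ℝ) / (n : ℝ) + 1) :=
    mul_le_mul_of_nonneg_left hprod hnn0
  calc (lamS / lam) * ((n : ℝ) / (n0 : ℝ)) * Real.exp (-(n0 : ℝ) ^ 2 / (n : ℝ))
      = (lamS / lam) * (((n:ℝ)/(n0:ℝ)) * Real.exp (-(n0 : ℝ) ^ 2 / (n : ℝ))) := by ring
    _ ≤ (lamS / lam) * (((n:ℝ)/(n0:ℝ)) * ∏ k ∈ Finset.Icc 1 (n0 - 1), 1 / ((k : ℝ) / (n : ℝ) + 1)) :=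
        mul_le_mul_of_nonneg_left h2 hll
    _ ≤ _ := by
        apply mul_le_mul_of_nonneg_left _ hll
        linarith
end

section
/- Fix reals c > 0, λs > 0, λ > 0 and α ∈ [1/2, 1]. Then there exist a constant C > 0 and an integer N such that for every integer n ≥ N, setting n0 = ⌈n^{1−α}/c⌉ (the size of each mini-ring when ñ = c·n^α jammers are placed equidistantly on a ring of n nodes), one has F(n, n0) ≥ C·n^α. That is, with Θ(n^α) equidistant jammers and α ≥ 1/2, the version age of every node is Ω(n^α). -/
open Finset

lemma prod_ge_aux (n m : ℕ) (hn : 0 < n) :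
    Real.exp (-((m:ℝ)^2 / n)) ≤ ∏ k ∈ Finset.Icc 1 m, 1 / ((k : ℝ) / (n:ℝ) + 1) := by
  have hnR : (0:ℝ) < n := by exact_mod_cast hn
  calc Real.exp (-((m:ℝ)^2/n)) = Real.exp (-((m:ℝ)/n)) ^ m := by
        rw [← Real.exp_nat_mul]; congr 1; ring
    _ = ∏ _k ∈ Finset.Icc 1 m, Real.exp (-((m:ℝ)/n)) := by
        rw [Finset.prod_const, Nat.card_Icc]; norm_num
    _ ≤ ∏ k ∈ Finset.Icc 1 m, 1 / ((k:ℝ)/(n:ℝ) + 1) := by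
        apply Finset.prod_le_prod
        · intros; positivity
        · intro k hk
          have hk' : (k:ℝ) ≤ m := by exact_mod_cast (Finset.mem_Icc.mp hk).2
          have hk0 : (0:ℝ) ≤ (k:ℝ)/n := by positivity
          have h1 : Real.exp (-((m:ℝ)/n)) ≤ Real.exp (-((k:ℝ)/n)) := by
            apply Real.exp_le_exp.mpr
            have : (k:ℝ)/n ≤ (m:ℝ)/n := by gcongr
            linarith
          have h2 : Real.exp (-((k:ℝ)/n)) ≤ 1/((k:ℝ)/n+1) := by
            rw [le_div_iff₀ (by positivity)]
            have key : Real.exp (-((k:ℝ)/n)) * Real.exp ((k:ℝ)/n) = 1 := by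
              rw [← Real.exp_add]; simp
            have h := Real.add_one_le_exp ((k:ℝ)/n)
            nlinarith [(Real.exp_pos (-((k:ℝ)/n))).le]
          linarith

/-- With `ñ = c·n^α` equidistant jammers and `α ∈ [1/2, 1]`, each mini-ring has
`n0 = ⌈n^(1-α)/c⌉` nodes and the version age of every node is `Ω(n^α)`:
`F(n, n0) ≥ C·n^α` for large `n`. -/
theorem equidistant_jammers_age_lower_bound_large_alpha
    (c lamS lam α : ℝ) (hc : 0 < c) (hlamS : 0 < lamS) (hlam : 0 < lam)
    (hα1 : 1 / 2 ≤ α) (hα2 : α ≤ 1) :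
    ∃ C : ℝ, 0 < C ∧ ∃ N : ℕ, ∀ n : ℕ, N ≤ n →
      C * (n : ℝ) ^ α ≤ ringNodeAge lamS lam n ⌈(n : ℝ) ^ (1 - α) / c⌉₊ := by
  refine ⟨lamS / lam * (c / (1 + c)) * Real.exp (-(1/c^2)), by positivity, 1, ?_⟩
  intro n hn
  have hn1 : (1:ℝ) ≤ (n:ℝ) := by exact_mod_cast hn
  have hnpos : (0:ℝ) < n := by linarith
  set B : ℝ := (n:ℝ) ^ (1-α) with hB
  have hB1 : 1 ≤ B := by
    have := Real.rpow_le_rpow_of_exponent_le hn1 (by linarith : (0:ℝ) ≤ 1 - α)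
    simpa using this
  have hBpos : 0 < B := by linarith
  set x : ℝ := B / c with hxdef
  have hxpos : 0 < x := by positivity
  set n0 : ℕ := ⌈x⌉₊ with hn0def
  have hn0 : 1 ≤ n0 := Nat.one_le_iff_ne_zero.mpr (by positivity)
  have hn0pos : (0:ℝ) < n0 := by exact_mod_cast hn0
  set m : ℕ := n0 - 1 with hmdef
  have hmR : (m:ℝ) = (n0:ℝ) - 1 := by
    have : (m:ℝ) = ((n0:ℕ) - 1 : ℕ) := rfl
    rw [this, Nat.cast_sub hn0]; norm_num
  have hceil : (n0:ℝ) < x + 1 := by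
    simpa using Nat.ceil_lt_add_one hxpos.le
  have hmx : (m:ℝ) ≤ x := by rw [hmR]; linarith
  -- n^α
  set A : ℝ := (n:ℝ) ^ α with hA
  have hApos : 0 < A := Real.rpow_pos_of_pos hnpos α
  have hAB : A * B = (n:ℝ) := by
    rw [hA, hB, ← Real.rpow_add hnpos]; simp
  -- m^2 / n ≤ 1/c^2
  have hBB : B * B ≤ (n:ℝ) := by
    rw [hB, ← Real.rpow_add hnpos]
    calc (n:ℝ) ^ (1 - α + (1 - α)) ≤ (n:ℝ) ^ (1:ℝ) :=
          Real.rpow_le_rpow_of_exponent_le hn1 (by linarith)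
      _ = (n:ℝ) := Real.rpow_one _
  have hm2 : (m:ℝ)^2 / n ≤ 1/c^2 := by
    rw [div_le_div_iff₀ hnpos (by positivity)]
    have hx2 : x^2 = B*B/c^2 := by rw [hxdef]; ring
    have h1 : (m:ℝ)^2 ≤ x^2 := by nlinarith [hmx, hmR, hn0pos]
    have h3 := mul_le_mul_of_nonneg_right h1 (by positivity : (0:ℝ) ≤ c^2)
    have h4 : x^2 * c^2 = B*B := by rw [hx2]; field_simp
    linarith
  -- product lower bound
  have hP : Real.exp (-(1/c^2)) ≤ ∏ k ∈ Finset.Icc 1 m, 1 / ((k:ℝ)/(n:ℝ) + 1) := by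
    calc Real.exp (-(1/c^2)) ≤ Real.exp (-((m:ℝ)^2/n)) := by
          apply Real.exp_le_exp.mpr; linarith
      _ ≤ _ := prod_ge_aux n m (by exact_mod_cast hnpos)
  -- n/n0 lower bound
  have hn0le : (n0:ℝ) ≤ B * (1 + c) / c := by
    have : x + 1 ≤ B/c + B := by
      rw [hxdef]; linarith
    calc (n0:ℝ) ≤ x + 1 := hceil.le
      _ ≤ B/c + B := this
      _ = B * (1 + c) / c := by field_simp
  have hdiv : c * A / (1 + c) ≤ (n:ℝ) / (n0:ℝ) := by
    rw [div_le_div_iff₀ (by linarith) hn0pos]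
    calc c * A * n0 ≤ c * A * (B * (1+c)/c) := by
          apply mul_le_mul_of_nonneg_left hn0le (by positivity)
      _ = A * B * (1+c) := by field_simp
      _ = (n:ℝ) * (1+c) := by rw [hAB]
  -- sum nonneg
  have hS : 0 ≤ ∑ j ∈ Finset.Icc 1 m, ∏ k ∈ Finset.Icc 1 j, 1 / ((k:ℝ)/(n:ℝ) + 1) := by
    apply Finset.sum_nonneg; intro j _
    apply Finset.prod_nonneg; intro k _; positivity
  -- assemble
  rw [ringNodeAge]
  have hkey : c * A / (1+c) * Real.exp (-(1/c^2)) ≤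
      ((n:ℝ)/(n0:ℝ)) * ∏ k ∈ Finset.Icc 1 m, 1 / ((k:ℝ)/(n:ℝ) + 1) :=
    mul_le_mul hdiv hP (Real.exp_pos _).le (by positivity)
  have hfrac : 0 < lamS / lam := by positivity
  calc lamS / lam * (c / (1 + c)) * Real.exp (-(1/c^2)) * A
      = lamS / lam * (c * A / (1+c) * Real.exp (-(1/c^2))) := by ring
    _ ≤ lamS / lam * (((n:ℝ)/(n0:ℝ)) * ∏ k ∈ Finset.Icc 1 m, 1 / ((k:ℝ)/(n:ℝ) + 1)) := by
        apply mul_le_mul_of_nonneg_left hkey hfrac.le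
    _ ≤ lamS / lam * ((∑ j ∈ Finset.Icc 1 m, ∏ k ∈ Finset.Icc 1 j, 1 / ((k:ℝ)/(n:ℝ) + 1))
          + ((n:ℝ)/(n0:ℝ)) * ∏ k ∈ Finset.Icc 1 m, 1 / ((k:ℝ)/(n:ℝ) + 1)) := by
        apply mul_le_mul_of_nonneg_left _ hfrac.le
        linarith
end

section
/- Fix reals c > 0, λs > 0, λ > 0 and α ∈ [0, 1/2). Then there exist a constant C > 0 and an integer N such that for every integer n ≥ N, setting n0 = ⌈n^{1−α}/c⌉ (the size of each mini-ring when ñ = c·n^α jammers are placed equidistantly on a ring of n nodes), one has F(n, n0) ≥ C·√n. That is, with Θ(n^α) equidistant jammers and α < 1/2, the version age of every node is Ω(√n). -/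
open Finset

/-- With `ñ = c·n^α` equidistant jammers and `α ∈ [0, 1/2)`, each mini-ring has
`n0 = ⌈n^(1-α)/c⌉` nodes and the version age of every node is `Ω(√n)`:
`F(n, n0) ≥ C·√n` for large `n`. -/
theorem equidistant_jammers_age_lower_bound_small_alpha
    (c lamS lam α : ℝ) (hc : 0 < c) (hlamS : 0 < lamS) (hlam : 0 < lam)
    (hα1 : 0 ≤ α) (hα2 : α < 1 / 2) :
    ∃ C : ℝ, 0 < C ∧ ∃ N : ℕ, ∀ n : ℕ, N ≤ n →
      C * Real.sqrt n ≤ ringNodeAge lamS lam n ⌈(n : ℝ) ^ (1 - α) / c⌉₊ := by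
  -- N₁ such that n^{1/2-α} ≥ 2c for n ≥ N₁
  obtain ⟨N₁, hN₁⟩ : ∃ N₁ : ℕ, ∀ n : ℕ, N₁ ≤ n → 2 * c ≤ (n : ℝ) ^ ((1:ℝ)/2 - α) := by
    have h : Filter.Tendsto (fun n : ℕ => (n : ℝ) ^ ((1:ℝ)/2 - α)) Filter.atTop Filter.atTop :=
      (tendsto_rpow_atTop (by linarith)).comp tendsto_natCast_atTop_atTop
    exact Filter.eventually_atTop.mp (h.eventually_ge_atTop (2 * c))
  refine ⟨lamS / (6 * lam), by positivity, max N₁ 4, fun n hn => ?_⟩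
  have hn4 : (4 : ℕ) ≤ n := le_trans (le_max_right _ _) hn
  have hnN₁ : N₁ ≤ n := le_trans (le_max_left _ _) hn
  have hnpos : (0 : ℝ) < n := by exact_mod_cast lt_of_lt_of_le (by norm_num) hn4
  set n0 : ℕ := ⌈(n : ℝ) ^ (1 - α) / c⌉₊ with hn0
  set m : ℕ := ⌊Real.sqrt n⌋₊ with hm
  have hsq2 : (2 : ℝ) ≤ Real.sqrt n := by
    rw [show (2:ℝ) = Real.sqrt 4 by
      rw [show (4:ℝ) = 2^2 by norm_num, Real.sqrt_sq (by norm_num)]]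
    exact Real.sqrt_le_sqrt (by exact_mod_cast hn4)
  have hsqnn : (0 : ℝ) ≤ Real.sqrt n := Real.sqrt_nonneg _
  have hmle : (m : ℝ) ≤ Real.sqrt n := Nat.floor_le hsqnn
  have hmgt : Real.sqrt n - 1 ≤ (m : ℝ) := by
    have := Nat.lt_floor_add_one (Real.sqrt n)
    linarith
  -- Step A: √n + 1 ≤ n^{1-α}/c
  have hA : Real.sqrt n + 1 ≤ (n : ℝ) ^ (1 - α) / c := by
    have h2c : 2 * c ≤ (n : ℝ) ^ ((1:ℝ)/2 - α) := hN₁ n hnN₁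
    have hsplit : (n : ℝ) ^ (1 - α) = (n : ℝ) ^ ((1:ℝ)/2 - α) * (n : ℝ) ^ ((1:ℝ)/2) := by
      rw [← Real.rpow_add hnpos]; ring_nf
    have hsqr : Real.sqrt n = (n : ℝ) ^ ((1:ℝ)/2) := by
      rw [Real.sqrt_eq_rpow]
    rw [le_div_iff₀ hc]
    have h1 : (Real.sqrt n + 1) * c ≤ 2 * Real.sqrt n * c := by nlinarith
    have h2 : 2 * Real.sqrt n * c ≤ (n:ℝ) ^ ((1:ℝ)/2 - α) * Real.sqrt n := by
      have : 2 * c ≤ (n:ℝ) ^ ((1:ℝ)/2 - α) := h2c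
      nlinarith
    calc (Real.sqrt n + 1) * c ≤ (n:ℝ) ^ ((1:ℝ)/2 - α) * Real.sqrt n := h1.trans h2
      _ = (n:ℝ) ^ (1 - α) := by rw [hsplit, hsqr]
  -- Step B: m + 1 ≤ n0
  have hB : m + 1 ≤ n0 := by
    have : ((m : ℝ) + 1) ≤ (n0 : ℝ) :=
      le_trans (by linarith) (le_trans hA (Nat.le_ceil _))
    exact_mod_cast this
  have hmn0 : m ≤ n0 - 1 := by omega
  -- each term is nonneg
  have hterm_nonneg : ∀ j : ℕ, 0 ≤ ∏ k ∈ Finset.Icc 1 j, 1 / ((k : ℝ) / n + 1) := by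
    intro j
    apply Finset.prod_nonneg
    intro k hk
    have hk1 : 1 ≤ k := (Finset.mem_Icc.mp hk).1
    positivity
  -- Step E: per-term lower bound 1/3 on Icc 1 m
  have hm2 : (m : ℝ) * m ≤ n := by
    nlinarith [Real.sq_sqrt (le_of_lt hnpos), hmle, hsqnn]
  have hE : ∀ j ∈ Finset.Icc 1 m, (1:ℝ)/3 ≤ ∏ k ∈ Finset.Icc 1 j, 1 / ((k : ℝ) / n + 1) := by
    intro j hj
    obtain ⟨hj1, hjm⟩ := Finset.mem_Icc.mp hj
    set x : ℝ := (m : ℝ) / n + 1 with hx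
    have hx1 : (1:ℝ) ≤ x := by
      rw [hx]
      have : (0:ℝ) ≤ (m:ℝ)/n := by positivity
      linarith
    have hxpos : (0:ℝ) < x := by linarith
    have hxj : x ^ j ≤ 3 := by
      have h1 : x ^ j ≤ x ^ m := pow_le_pow_right₀ hx1 hjm
      have h2 : x ≤ Real.exp ((m:ℝ)/n) := by
        have := Real.add_one_le_exp ((m:ℝ)/n)
        linarith
      have h3 : x ^ m ≤ Real.exp ((m:ℝ)/n) ^ m :=
        pow_le_pow_left₀ (le_of_lt hxpos) h2 m
      have h4 : Real.exp ((m:ℝ)/n) ^ m = Real.exp ((m:ℝ) * ((m:ℝ)/n)) := by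
        rw [← Real.exp_nat_mul]
      have h5 : (m:ℝ) * ((m:ℝ)/n) ≤ 1 := by
        rw [mul_div_assoc']
        exact (div_le_one hnpos).mpr hm2
      have h6 : Real.exp ((m:ℝ) * ((m:ℝ)/n)) ≤ Real.exp 1 := Real.exp_le_exp.mpr h5
      have h7 : Real.exp 1 ≤ 3 := by
        have := Real.exp_one_lt_d9
        linarith
      linarith
    have hprod : (1/x) ^ j ≤ ∏ k ∈ Finset.Icc 1 j, 1 / ((k : ℝ) / n + 1) := by
      have := Finset.prod_le_prod (s := Finset.Icc 1 j)
        (f := fun _ : ℕ => 1/x) (g := fun k : ℕ => 1 / ((k : ℝ) / n + 1))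
        (fun i _ => by positivity)
        (fun i hi => by
          obtain ⟨hi1, hij⟩ := Finset.mem_Icc.mp hi
          have hik : (i : ℝ) ≤ m := by exact_mod_cast hij.trans hjm
          have hden : (i:ℝ)/n + 1 ≤ x := by
            have hdd : (i:ℝ)/n ≤ (m:ℝ)/n := by gcongr
            rw [hx]; linarith
          have hdenpos : (0:ℝ) < (i:ℝ)/n + 1 := by positivity
          exact one_div_le_one_div_of_le hdenpos hden)
      simpa using this
    have hpow : (1:ℝ)/3 ≤ (1/x) ^ j := by
      rw [div_pow, one_pow]
      exact one_div_le_one_div_of_le (by positivity) hxj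
    linarith
  -- Step D+F: sum lower bound
  have hsub : Finset.Icc 1 m ⊆ Finset.Icc 1 (n0 - 1) := by
    apply Finset.Icc_subset_Icc_right hmn0
  have hsum1 : (m : ℝ) * (1/3) ≤ ∑ j ∈ Finset.Icc 1 m, ∏ k ∈ Finset.Icc 1 j, 1 / ((k : ℝ) / n + 1) := by
    have := Finset.sum_le_sum hE
    simpa [Nat.card_Icc, mul_comm] using this
  have hsum2 : (∑ j ∈ Finset.Icc 1 m, ∏ k ∈ Finset.Icc 1 j, 1 / ((k : ℝ) / n + 1))
      ≤ ∑ j ∈ Finset.Icc 1 (n0-1), ∏ k ∈ Finset.Icc 1 j, 1 / ((k : ℝ) / n + 1) :=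
    Finset.sum_le_sum_of_subset_of_nonneg hsub (fun j _ _ => hterm_nonneg j)
  -- assemble
  have hsecond : 0 ≤ ((n : ℝ) / (n0 : ℝ)) * ∏ k ∈ Finset.Icc 1 (n0 - 1), 1 / ((k : ℝ) / n + 1) := by
    apply mul_nonneg (by positivity) (hterm_nonneg _)
  have hmsqrt : Real.sqrt n / 2 ≤ (m : ℝ) := by linarith
  have hS : Real.sqrt n / 6 ≤ ∑ j ∈ Finset.Icc 1 (n0-1), ∏ k ∈ Finset.Icc 1 j, 1 / ((k : ℝ) / n + 1) := by
    nlinarith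
  unfold ringNodeAge
  rw [show lamS / (6 * lam) * Real.sqrt n = (lamS / lam) * (Real.sqrt n / 6) by
    field_simp]
  apply mul_le_mul_of_nonneg_left _ (by positivity)
  linarith
end

section
/- Fix reals c > 0, λs > 0, λ > 0 and α ∈ [1/2, 1). Then there exist a constant C > 0 and an integer N such that for every integer n ≥ N, setting ñ = ⌈c·n^α⌉ and D(n) = ((ñ−1)·F(n, 1) + (n−ñ+1)·F(n, n−ñ+1))/n (the average version age in the most harmful jammer configuration, with ñ−1 isolated nodes and one mini-ring of n−ñ+1 nodes), one has D(n) ≤ C·n^α. That is, with Θ(n^α) jammers and α ≥ 1/2, the average version age is O(n^α). -/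
open Finset

section AuxLemmas

private lemma aux_one_add_sum_le_prod (s : Finset ℕ) (f : ℕ → ℝ) (hf : ∀ i ∈ s, 0 ≤ f i) :
    1 + ∑ i ∈ s, f i ≤ ∏ i ∈ s, (1 + f i) := by
  induction s using Finset.cons_induction with
  | empty => simp
  | cons a s ha ih =>
    rw [Finset.sum_cons, Finset.prod_cons]
    have h1 : 0 ≤ f a := hf a (Finset.mem_cons_self a s)
    have h2 : ∀ i ∈ s, 0 ≤ f i := fun i hi => hf i (Finset.mem_cons_of_mem hi)
    have h3 : 1 + ∑ i ∈ s, f i ≤ ∏ i ∈ s, (1 + f i) := ih h2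
    have h4 : 0 ≤ ∑ i ∈ s, f i := Finset.sum_nonneg h2
    nlinarith

private lemma aux_prod_pos (n j : ℕ) :
    0 < ∏ k ∈ Icc 1 j, (1 : ℝ) / ((k : ℝ) / (n : ℝ) + 1) := by
  apply Finset.prod_pos
  intro k hk
  have : (0:ℝ) ≤ (k : ℝ) / (n : ℝ) := by positivity
  positivity

private lemma aux_prod_le_one (n j : ℕ) :
    ∏ k ∈ Icc 1 j, (1 : ℝ) / ((k : ℝ) / (n : ℝ) + 1) ≤ 1 := by
  apply Finset.prod_le_one
  · intro k hk
    have : (0:ℝ) ≤ (k : ℝ) / (n : ℝ) := by positivity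
    positivity
  · intro k hk
    rw [div_le_one (by positivity)]
    have : (0:ℝ) ≤ (k : ℝ) / (n : ℝ) := by positivity
    linarith

private lemma aux_gauss : ∀ j : ℕ, (∑ k ∈ Icc 1 j, k) * 2 = j * (j + 1) := by
  intro j
  induction j with
  | zero => simp
  | succ j ih =>
    rw [Finset.sum_Icc_succ_top (by omega), add_mul, ih]
    ring

private lemma aux_prod_le (n j : ℕ) (hn : 1 ≤ n) (hj : 1 ≤ j) :
    ∏ k ∈ Icc 1 j, (1 : ℝ) / ((k : ℝ) / (n : ℝ) + 1) ≤ 2 * (n : ℝ) / (j : ℝ) ^ 2 := by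
  have hn' : (0:ℝ) < n := by exact_mod_cast hn
  have hsum : (j : ℝ) ^ 2 / (2 * n) ≤ ∑ k ∈ Icc 1 j, (k : ℝ) / (n : ℝ) := by
    rw [← Finset.sum_div]
    rw [div_le_div_iff₀ (by positivity) hn']
    have hgauss := aux_gauss j
    have hg : (∑ k ∈ Icc 1 j, (k:ℝ)) * 2 = (j:ℝ) * ((j:ℝ) + 1) := by
      have h2 := congrArg (fun x : ℕ => (x : ℝ)) hgauss
      push_cast at h2
      exact h2
    nlinarith [sq_nonneg ((j:ℝ))]
  have hprodlb : (j : ℝ) ^ 2 / (2 * n) ≤ ∏ k ∈ Icc 1 j, ((k : ℝ) / (n : ℝ) + 1) := by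
    have h := aux_one_add_sum_le_prod (Icc 1 j) (fun k => (k : ℝ) / (n : ℝ))
      (fun k _ => by positivity)
    calc (j : ℝ) ^ 2 / (2 * n) ≤ ∑ k ∈ Icc 1 j, (k : ℝ) / (n : ℝ) := hsum
    _ ≤ 1 + ∑ k ∈ Icc 1 j, (k : ℝ) / (n : ℝ) := by linarith
    _ ≤ ∏ k ∈ Icc 1 j, (1 + (k : ℝ) / (n : ℝ)) := h
    _ = ∏ k ∈ Icc 1 j, ((k : ℝ) / (n : ℝ) + 1) := by simp [add_comm]
  have hj' : (0:ℝ) < (j:ℝ) := by exact_mod_cast hj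
  have hplb : (0:ℝ) < (j : ℝ) ^ 2 / (2 * n) := by positivity
  rw [Finset.prod_div_distrib, Finset.prod_const_one]
  rw [div_le_div_iff₀ (lt_of_lt_of_le hplb hprodlb) (by positivity)]
  calc (1:ℝ) * (j:ℝ)^2 = ((j : ℝ) ^ 2 / (2 * n)) * (2 * n) := by field_simp
  _ ≤ (∏ k ∈ Icc 1 j, ((k : ℝ) / (n : ℝ) + 1)) * (2 * n) := by
      apply mul_le_mul_of_nonneg_right hprodlb (by positivity)
  _ = 2 * (n:ℝ) * ∏ k ∈ Icc 1 j, ((k : ℝ) / (n : ℝ) + 1) := by ring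

private lemma aux_sum_inv_sq (m : ℕ) (hm : 1 ≤ m) :
    ∀ L : ℕ, ∑ j ∈ Icc (m + 1) L, ((j : ℝ) ^ 2)⁻¹ ≤ (m : ℝ)⁻¹ - ((max m L : ℕ) : ℝ)⁻¹ := by
  intro L
  induction L with
  | zero => simp [Nat.Icc_eq_range', max_eq_left (Nat.zero_le m)]
  | succ L ih =>
    rcases le_or_gt (m + 1) (L + 1) with h | h
    · have hmL : m ≤ L := Nat.lt_succ_iff.mp h
      rw [Finset.sum_Icc_succ_top h, max_eq_right (hmL.trans (Nat.le_succ L))]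
      rw [max_eq_right hmL] at ih
      have hL1 : (1 : ℝ) ≤ (L : ℝ) := by exact_mod_cast hm.trans hmL
      have key : (((L + 1 : ℕ) : ℝ) ^ 2)⁻¹ ≤ ((L : ℕ) : ℝ)⁻¹ - ((L + 1 : ℕ) : ℝ)⁻¹ := by
        push_cast
        have h1 : ((L : ℝ))⁻¹ - ((L : ℝ) + 1)⁻¹ = ((L : ℝ) * ((L : ℝ) + 1))⁻¹ := by
          field_simp
          ring
        rw [h1]
        apply inv_anti₀ (by nlinarith)
        nlinarith
      push_cast at *
      linarith
    · have hempty : Icc (m + 1) (L + 1) = ∅ := Finset.Icc_eq_empty (by omega)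
      rw [hempty, max_eq_left (by omega)]
      simp

/-- The main sum bound: `∑_{j=1}^L ∏_{k=1}^j 1/(k/n+1) ≤ 3√n + 1`. -/
private lemma aux_sum_bound (n L : ℕ) (hn : 1 ≤ n) :
    ∑ j ∈ Icc 1 L, (∏ k ∈ Icc 1 j, (1 : ℝ) / ((k : ℝ) / (n : ℝ) + 1))
      ≤ 3 * Real.sqrt n + 1 := by
  set m : ℕ := Nat.sqrt n + 1 with hm
  have hn' : (0:ℝ) < n := by exact_mod_cast hn
  have hsq_nonneg : (0:ℝ) ≤ Real.sqrt n := Real.sqrt_nonneg _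
  have hm1 : 1 ≤ m := by omega
  have hmpos : (0:ℝ) < (m:ℝ) := by exact_mod_cast hm1
  have hsq_lt : Real.sqrt n < (m : ℝ) := by
    rw [Real.sqrt_lt' hmpos]
    have h2 : n < (Nat.sqrt n + 1) ^ 2 := by
      have := Nat.lt_succ_sqrt n
      simpa [pow_two] using this
    exact_mod_cast h2
  have hm_le : (m : ℝ) ≤ Real.sqrt n + 1 := by
    have h1 : ((Nat.sqrt n : ℕ) : ℝ) ≤ Real.sqrt n := by
      have h2 : ((Nat.sqrt n : ℕ) : ℝ) ^ 2 ≤ (n : ℝ) := by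
        have h3 : Nat.sqrt n ^ 2 ≤ n := by simpa [pow_two] using Nat.sqrt_le' n
        exact_mod_cast h3
      have h4 := Real.sqrt_le_sqrt h2
      rwa [Real.sqrt_sq (by positivity)] at h4
    rw [hm]
    push_cast
    linarith
  -- cardinality bound for an initial segment
  have hcard : ∀ K : ℕ, ∑ j ∈ Icc 1 K, (∏ k ∈ Icc 1 j, (1 : ℝ) / ((k : ℝ) / (n : ℝ) + 1))
      ≤ (K : ℝ) := by
    intro K
    calc ∑ j ∈ Icc 1 K, (∏ k ∈ Icc 1 j, (1 : ℝ) / ((k : ℝ) / (n : ℝ) + 1))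
        ≤ ∑ j ∈ Icc 1 K, (1:ℝ) := by
          apply Finset.sum_le_sum
          intro j _
          exact aux_prod_le_one n j
    _ = (K : ℝ) := by simp [Nat.card_Icc]
  rcases le_or_gt L m with hLm | hmL
  · calc ∑ j ∈ Icc 1 L, (∏ k ∈ Icc 1 j, (1 : ℝ) / ((k : ℝ) / (n : ℝ) + 1))
        ≤ (L : ℝ) := hcard L
    _ ≤ (m : ℝ) := by exact_mod_cast hLm
    _ ≤ Real.sqrt n + 1 := hm_le
    _ ≤ 3 * Real.sqrt n + 1 := by linarith
  · -- split the sum at m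
    have h0m : Icc 1 m = Ioc 0 m := by rw [← Finset.Icc_add_one_left_eq_Ioc]; rfl
    have h0L : Icc 1 L = Ioc 0 L := by rw [← Finset.Icc_add_one_left_eq_Ioc]; rfl
    have hmL' : Icc (m+1) L = Ioc m L := by rw [← Finset.Icc_add_one_left_eq_Ioc]
    have hsplit := Finset.sum_Ioc_consecutive
      (f := fun j => ∏ k ∈ Icc 1 j, (1 : ℝ) / ((k : ℝ) / (n : ℝ) + 1))
      (Nat.zero_le m) (le_of_lt hmL)
    have htail : ∑ j ∈ Ioc m L, (∏ k ∈ Icc 1 j, (1 : ℝ) / ((k : ℝ) / (n : ℝ) + 1))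
        ≤ 2 * Real.sqrt n := by
      calc ∑ j ∈ Ioc m L, (∏ k ∈ Icc 1 j, (1 : ℝ) / ((k : ℝ) / (n : ℝ) + 1))
          ≤ ∑ j ∈ Ioc m L, 2 * (n : ℝ) * ((j : ℝ)^2)⁻¹ := by
            apply Finset.sum_le_sum
            intro j hj
            have hj1 : 1 ≤ j := by
              have := (Finset.mem_Ioc.mp hj).1
              omega
            have := aux_prod_le n j hn hj1
            rw [div_eq_mul_inv] at this
            exact this
      _ = 2 * (n : ℝ) * ∑ j ∈ Icc (m+1) L, ((j : ℝ)^2)⁻¹ := by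
            rw [hmL', Finset.mul_sum]
      _ ≤ 2 * (n : ℝ) * ((m : ℝ)⁻¹ - ((max m L : ℕ) : ℝ)⁻¹) := by
            apply mul_le_mul_of_nonneg_left (aux_sum_inv_sq m hm1 L) (by positivity)
      _ ≤ 2 * (n : ℝ) * (m : ℝ)⁻¹ := by
            have : (0:ℝ) ≤ ((max m L : ℕ) : ℝ)⁻¹ := by positivity
            nlinarith
      _ ≤ 2 * (n : ℝ) * (Real.sqrt n)⁻¹ := by
            apply mul_le_mul_of_nonneg_left _ (by positivity)
            apply inv_anti₀ (Real.sqrt_pos.mpr hn') (le_of_lt hsq_lt)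
      _ = 2 * Real.sqrt n := by
            rw [mul_assoc, ← div_eq_mul_inv, Real.div_sqrt]
    calc ∑ j ∈ Icc 1 L, (∏ k ∈ Icc 1 j, (1 : ℝ) / ((k : ℝ) / (n : ℝ) + 1))
        = (∑ j ∈ Ioc 0 m, (∏ k ∈ Icc 1 j, (1 : ℝ) / ((k : ℝ) / (n : ℝ) + 1)))
          + ∑ j ∈ Ioc m L, (∏ k ∈ Icc 1 j, (1 : ℝ) / ((k : ℝ) / (n : ℝ) + 1)) := by
          rw [h0L, ← hsplit]
    _ ≤ (m : ℝ) + 2 * Real.sqrt n := by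
          have := hcard m
          rw [h0m] at this
          linarith
    _ ≤ (Real.sqrt n + 1) + 2 * Real.sqrt n := by linarith
    _ = 3 * Real.sqrt n + 1 := by ring

end AuxLemmas

/-- With `ñ = ⌈c·n^α⌉` jammers in the most harmful configuration (`ñ - 1` isolated nodes and
one mini-ring of `n - ñ + 1` nodes) and `α ∈ [1/2, 1)`, the average version age
`D(n) = ((ñ-1)·F(n,1) + (n-ñ+1)·F(n, n-ñ+1))/n` is `O(n^α)`: `D(n) ≤ C·n^α` for large `n`. -/
theorem most_harmful_jammers_age_upper_bound_large_alpha
    (c lamS lam α : ℝ) (hc : 0 < c) (hlamS : 0 < lamS) (hlam : 0 < lam)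
    (hα1 : 1 / 2 ≤ α) (hα2 : α < 1) :
    ∃ C : ℝ, 0 < C ∧ ∃ N : ℕ, ∀ n : ℕ, N ≤ n →
      ((⌈c * (n : ℝ) ^ α⌉₊ - 1 : ℝ) * ringNodeAge lamS lam n 1
          + ((n - ⌈c * (n : ℝ) ^ α⌉₊ + 1 : ℕ) : ℝ)
            * ringNodeAge lamS lam n (n - ⌈c * (n : ℝ) ^ α⌉₊ + 1)) / (n : ℝ)
        ≤ C * (n : ℝ) ^ α := by
  refine ⟨lamS / lam * (c + 7), by positivity, ?_⟩
  -- find N such that for n ≥ N: 4 ≤ n and (n:ℝ)^(α-1) < 1/(4*c)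
  have htend : Filter.Tendsto (fun x : ℝ => x ^ (α - 1)) Filter.atTop (nhds 0) := by
    have h1 : α - 1 = -(1 - α) := by ring
    rw [h1]
    exact tendsto_rpow_neg_atTop (by linarith)
  have htendN : Filter.Tendsto (fun n : ℕ => ((n:ℝ)) ^ (α - 1)) Filter.atTop (nhds 0) :=
    htend.comp tendsto_natCast_atTop_atTop
  have hev : ∀ᶠ n : ℕ in Filter.atTop, ((n:ℝ)) ^ (α - 1) < 1 / (4 * c) :=
    htendN.eventually_lt_const (by positivity)
  have hev4 : ∀ᶠ n : ℕ in Filter.atTop, 4 ≤ n := Filter.eventually_ge_atTop 4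
  obtain ⟨N, hN⟩ := Filter.eventually_atTop.mp (hev.and hev4)
  refine ⟨N, fun n hn => ?_⟩
  obtain ⟨hsmall, hn4⟩ := hN n hn
  -- basic facts
  have hn1 : 1 ≤ n := by omega
  have hnpos : (0:ℝ) < n := by exact_mod_cast hn1
  have hn4R : (4:ℝ) ≤ n := by exact_mod_cast hn4
  have hpowpos : (0:ℝ) < (n:ℝ) ^ α := Real.rpow_pos_of_pos hnpos α
  have hone_le_pow : (1:ℝ) ≤ (n:ℝ) ^ α := by
    calc (1:ℝ) = (n:ℝ) ^ (0:ℝ) := (Real.rpow_zero _).symm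
    _ ≤ (n:ℝ) ^ α := Real.rpow_le_rpow_of_exponent_le (by exact_mod_cast hn1) (by linarith)
  have hpow_split : (n:ℝ) ^ α = (n:ℝ) ^ (α - 1) * n := by
    rw [← Real.rpow_add_one (ne_of_gt hnpos) (α - 1)]
    ring_nf
  have hcn : c * (n:ℝ) ^ α ≤ (n:ℝ) / 4 := by
    rw [hpow_split]
    have h1 : c * ((n:ℝ) ^ (α - 1)) ≤ 1/4 := by
      have := mul_lt_mul_of_pos_left hsmall hc
      rw [mul_one_div] at this
      have h2 : c / (4 * c) = 1/4 := by field_simp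
      linarith [this.le.trans (le_of_eq h2)]
    nlinarith [Real.rpow_pos_of_pos hnpos (α - 1)]
  set nt : ℕ := ⌈c * (n : ℝ) ^ α⌉₊ with hnt
  have hnt1 : 1 ≤ nt := Nat.one_le_iff_ne_zero.mpr (by
    have : 0 < nt := Nat.ceil_pos.mpr (by positivity)
    omega)
  have hntR : (nt : ℝ) < c * (n:ℝ)^α + 1 := Nat.ceil_lt_add_one (by positivity)
  have hnthalf : (nt : ℝ) ≤ (n:ℝ)/2 := by
    have : (1:ℝ) ≤ (n:ℝ)/4 := by linarith
    linarith
  have hntn : nt ≤ n := by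
    have : (nt : ℝ) ≤ (n : ℝ) := by linarith
    exact_mod_cast this
  set n0 : ℕ := n - nt + 1 with hn0
  have hn0cast : (n0 : ℝ) = (n:ℝ) - (nt:ℝ) + 1 := by
    rw [hn0]
    push_cast [hntn]
    ring
  have hn0half : (n:ℝ)/2 ≤ (n0:ℝ) := by rw [hn0cast]; linarith
  have hn0pos : (0:ℝ) < (n0:ℝ) := by linarith
  have hn0len : (n0:ℝ) ≤ (n:ℝ) := by
    rw [hn0cast]
    have : (1:ℝ) ≤ (nt:ℝ) := by exact_mod_cast hnt1
    linarith
  -- value of ringNodeAge at 1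
  have hF1 : ringNodeAge lamS lam n 1 = lamS / lam * (n:ℝ) := by
    simp [ringNodeAge]
  -- bound on ringNodeAge at n0
  have hsqrt_le : Real.sqrt n ≤ (n:ℝ) ^ α := by
    rw [show Real.sqrt (n:ℝ) = (n:ℝ) ^ ((1:ℝ)/2) from Real.sqrt_eq_rpow _]
    exact Real.rpow_le_rpow_of_exponent_le (by exact_mod_cast hn1) hα1
  have hFn0 : ringNodeAge lamS lam n n0 ≤ lamS / lam * (6 * (n:ℝ) ^ α) := by
    rw [ringNodeAge]
    apply mul_le_mul_of_nonneg_left _ (by positivity)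
    have hS := aux_sum_bound n (n0 - 1) hn1
    have hT : (n : ℝ) / (n0 : ℝ) * ∏ k ∈ Finset.Icc 1 (n0 - 1), 1 / ((k : ℝ) / (n : ℝ) + 1)
        ≤ 2 := by
      have hp1 := aux_prod_le_one n (n0 - 1)
      have hp0 := aux_prod_pos n (n0 - 1)
      have hq : (n : ℝ) / (n0 : ℝ) ≤ 2 := by
        rw [div_le_iff₀ hn0pos]
        linarith
      calc (n : ℝ) / (n0 : ℝ) * ∏ k ∈ Finset.Icc 1 (n0 - 1), 1 / ((k : ℝ) / (n : ℝ) + 1)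
          ≤ (n : ℝ) / (n0 : ℝ) * 1 := by
            apply mul_le_mul_of_nonneg_left hp1 (by positivity)
      _ ≤ 2 := by rw [mul_one]; exact hq
    calc (∑ j ∈ Finset.Icc 1 (n0 - 1), ∏ k ∈ Finset.Icc 1 j, 1 / ((k : ℝ) / (n : ℝ) + 1))
          + (n : ℝ) / (n0 : ℝ) * ∏ k ∈ Finset.Icc 1 (n0 - 1), 1 / ((k : ℝ) / (n : ℝ) + 1)
        ≤ (3 * Real.sqrt n + 1) + 2 := by linarith
    _ ≤ 3 * (n:ℝ)^α + 3 * (n:ℝ)^α := by linarith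
    _ = 6 * (n:ℝ)^α := by ring
  -- assemble
  have hFn0nonneg : 0 ≤ ringNodeAge lamS lam n n0 := by
    rw [ringNodeAge]
    have hp0 := aux_prod_pos n (n0 - 1)
    have hSnn : 0 ≤ ∑ j ∈ Finset.Icc 1 (n0 - 1),
        ∏ k ∈ Finset.Icc 1 j, 1 / ((k : ℝ) / (n : ℝ) + 1) :=
      Finset.sum_nonneg fun j _ => (aux_prod_pos n j).le
    have : (0:ℝ) ≤ (n : ℝ) / (n0 : ℝ) := by positivity
    positivity
  have hnt_sub : (0:ℝ) ≤ (nt : ℝ) - 1 := by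
    have : (1:ℝ) ≤ (nt:ℝ) := by exact_mod_cast hnt1
    linarith
  have hnt_sub_le : (nt : ℝ) - 1 ≤ c * (n:ℝ)^α := by linarith
  rw [div_le_iff₀ hnpos]
  calc ((nt : ℝ) - 1) * ringNodeAge lamS lam n 1 + (n0 : ℝ) * ringNodeAge lamS lam n n0
      ≤ c * (n:ℝ)^α * (lamS / lam * (n:ℝ)) + (n:ℝ) * (lamS / lam * (6 * (n:ℝ) ^ α)) := by
        apply add_le_add
        · rw [hF1]
          apply mul_le_mul_of_nonneg_right hnt_sub_le (by positivity)
        · calc (n0 : ℝ) * ringNodeAge lamS lam n n0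
              ≤ (n0 : ℝ) * (lamS / lam * (6 * (n:ℝ) ^ α)) :=
                mul_le_mul_of_nonneg_left hFn0 hn0pos.le
          _ ≤ (n:ℝ) * (lamS / lam * (6 * (n:ℝ) ^ α)) := by
                apply mul_le_mul_of_nonneg_right hn0len (by positivity)
  _ = lamS / lam * (c + 6) * (n:ℝ)^α * (n:ℝ) := by ring
  _ ≤ lamS / lam * (c + 7) * (n:ℝ)^α * (n:ℝ) := by nlinarith [hpowpos, hnpos]
end
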